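/- Let (y,θ) ∈ ℝ^{2N} with θ_i ≠ θ_j for all i ≠ j, and set M(θ) = sup_{x∈ℝ}|ψ_θ(x,θ)|, M_i = Σ_{j≠i} M(θ_i−θ_j), and T = max_{i≠j} (|y_i−y_j| + M_i + M_j + ε)/|θ_i−θ_j|. For t ∈ ℝ let x(t) ∈ ℝ^N be the unique solution of y_i + θ_i t = x_i(t) + Σ_{j≠i} ψ_θ(x_i(t)−x_j(t), θ_i−θ_j), and let p_i(t) = θ_i + Σ_{j≠i} ψ_x(x_i(t)−x_j(t), θ_i−θ_j). Then for every t with |t| ≥ T and all i ≠ j: |x_i(t)−x_j(t)| ≥ ε and sign(x_i(t)−x_j(t)) = sign(θ_i−θ_j)·sign(t); consequently x_i(t) = y_i + θ_i t − Σ_{j≠i} ψ_θ(sign(t)·sign(θ_i−θ_j)·ε, θ_i−θ_j) and p_i(t) = θ_i. In particular the trajectories are linear with momenta θ for all |t| ≥ T. -/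

import Mathlib

open Finset

lemma sign_mul' (a b : ℝ) : Real.sign (a * b) = Real.sign a * Real.sign b := by
  rcases lt_trichotomy a 0 with ha | ha | ha
  · rcases lt_trichotomy b 0 with hb | hb | hb
    · rw [Real.sign_of_pos (mul_pos_of_neg_of_neg ha hb), Real.sign_of_neg ha,
        Real.sign_of_neg hb]; ring
    · simp [hb, Real.sign_zero]
    · rw [Real.sign_of_neg (mul_neg_of_neg_of_pos ha hb), Real.sign_of_neg ha,
        Real.sign_of_pos hb]; ring
  · simp [ha, Real.sign_zero]
  · rcases lt_trichotomy b 0 with hb | hb | hb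
    · rw [Real.sign_of_neg (mul_neg_of_pos_of_neg ha hb), Real.sign_of_pos ha,
        Real.sign_of_neg hb]; ring
    · simp [hb, Real.sign_zero]
    · rw [Real.sign_of_pos (mul_pos ha hb), Real.sign_of_pos ha, Real.sign_of_pos hb]; ring

/-- Asymptotic linearity of the trajectories of the semiclassical Bethe system:
for `|t| ≥ T` (with `T` dominating `(|yᵢ−yⱼ| + Mᵢ + Mⱼ + ε)/|θᵢ−θⱼ|` for all `i ≠ j`)
all particles are separated by at least `ε`, the sign of `xᵢ(t)−xⱼ(t)` is
`sign(θᵢ−θⱼ)·sign(t)`, and the trajectories are linear with momenta `θ`. -/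
theorem stmt5 (N : ℕ) (ε : ℝ) (hε : 0 < ε)
    (ψ ψx ψθ ψxθ : ℝ → ℝ → ℝ)
    (hC2 : ContDiff ℝ 2 (fun q : ℝ × ℝ => ψ q.1 q.2))
    (hψx : ∀ x t, HasDerivAt (fun x' => ψ x' t) (ψx x t) x)
    (hψθ : ∀ x t, HasDerivAt (fun t' => ψ x t') (ψθ x t) t)
    (hψxθ : ∀ x t, HasDerivAt (fun t' => ψx x t') (ψxθ x t) t)
    (hpos : ∀ x t, 0 ≤ ψxθ x t)
    (hsym : ∀ x t, ψ (-x) (-t) = ψ x t)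
    (hrange : ∀ x t, ε ≤ |x| → ψx x t = 0)
    (y θ : Fin N → ℝ) (hdist : ∀ i j, i ≠ j → θ i ≠ θ j)
    (M : ℝ → ℝ) (hM : ∀ u, M u = ⨆ x : ℝ, |ψθ x u|)
    (Mi : Fin N → ℝ) (hMi : ∀ i, Mi i = ∑ j ∈ Finset.univ.erase i, M (θ i - θ j))
    (T : ℝ)
    (hT : ∀ i j, i ≠ j → (|y i - y j| + Mi i + Mi j + ε) / |θ i - θ j| ≤ T)
    (xt : ℝ → Fin N → ℝ)
    (hxt : ∀ t i, y i + θ i * t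
      = xt t i + ∑ j ∈ Finset.univ.erase i, ψθ (xt t i - xt t j) (θ i - θ j))
    (pt : ℝ → Fin N → ℝ)
    (hpt : ∀ t i, pt t i
      = θ i + ∑ j ∈ Finset.univ.erase i, ψx (xt t i - xt t j) (θ i - θ j)) :
    ∀ t : ℝ, T ≤ |t| →
      (∀ i j, i ≠ j →
        ε ≤ |xt t i - xt t j| ∧
        Real.sign (xt t i - xt t j) = Real.sign (θ i - θ j) * Real.sign t) ∧
      (∀ i, xt t i = y i + θ i * t
          - ∑ j ∈ Finset.univ.erase i,
              ψθ (Real.sign t * Real.sign (θ i - θ j) * ε) (θ i - θ j)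
        ∧ pt t i = θ i) := by
  -- ψ is constant in x on each side of [-ε, ε]
  have hcontψ : ∀ u, Continuous fun x' => ψ x' u := fun u =>
    continuous_iff_continuousAt.2 fun x => (hψx x u).continuousAt
  have constR : ∀ u a b, ε ≤ a → ε ≤ b → ψ a u = ψ b u := by
    have key : ∀ u a b, ε ≤ a → a ≤ b → ψ b u = ψ a u := by
      intro u a b ha hab
      exact constant_of_has_deriv_right_zero ((hcontψ u).continuousOn)
        (fun x hx => by
          have hx0 : ψx x u = 0 := hrange x u (le_abs.2 (Or.inl (ha.trans hx.1)))
          simpa [hx0] using (hψx x u).hasDerivWithinAt) b ⟨hab, le_refl b⟩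
    intro u a b ha hb
    rcases le_total a b with h | h
    · exact (key u a b ha h).symm
    · exact key u b a hb h
  have constL : ∀ u a b, a ≤ -ε → b ≤ -ε → ψ a u = ψ b u := by
    have key : ∀ u a b, b ≤ -ε → a ≤ b → ψ b u = ψ a u := by
      intro u a b hb hab
      exact constant_of_has_deriv_right_zero ((hcontψ u).continuousOn)
        (fun x hx => by
          have hx0 : ψx x u = 0 := hrange x u (le_abs.2 (Or.inr (by
            have := (hx.2).le.trans hb; linarith)))
          simpa [hx0] using (hψx x u).hasDerivWithinAt) b ⟨hab, le_refl b⟩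
    intro u a b ha hb
    rcases le_total a b with h | h
    · exact (key u a b hb h).symm
    · exact key u b a ha h
  have constθR : ∀ u a b, ε ≤ a → ε ≤ b → ψθ a u = ψθ b u := by
    intro u a b ha hb
    have hfun : (fun t' => ψ a t') = fun t' => ψ b t' := funext fun t' => constR t' a b ha hb
    exact (hψθ a u).unique (hfun ▸ hψθ b u)
  have constθL : ∀ u a b, a ≤ -ε → b ≤ -ε → ψθ a u = ψθ b u := by
    intro u a b ha hb
    have hfun : (fun t' => ψ a t') = fun t' => ψ b t' := funext fun t' => constL t' a b ha hb
    exact (hψθ a u).unique (hfun ▸ hψθ b u)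
  -- ψθ equals an evaluation of the fderiv, hence continuous in x
  set f : ℝ × ℝ → ℝ := fun q => ψ q.1 q.2 with hf
  have hdiff : Differentiable ℝ f := hC2.differentiable (by norm_num)
  have hψθ_fderiv : ∀ x u, ψθ x u = fderiv ℝ f (x, u) (0, 1) := by
    intro x u
    have hline : HasDerivAt (fun t' : ℝ => ((x, t') : ℝ × ℝ)) ((0 : ℝ), (1 : ℝ)) u :=
      (hasDerivAt_const u x).prodMk (hasDerivAt_id u)
    have := (hdiff (x, u)).hasFDerivAt.comp_hasDerivAt u hline
    exact (hψθ x u).unique this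
  have hcont_fderiv : Continuous (fderiv ℝ f) :=
    (hC2.fderiv_right (m := 1) (by norm_num)).continuous
  have hcont_ψθ : ∀ u, Continuous fun x => ψθ x u := by
    intro u
    have : Continuous fun x : ℝ => fderiv ℝ f (x, u) (0, 1) :=
      (hcont_fderiv.comp (continuous_id.prodMk continuous_const)).clm_apply continuous_const
    simpa [← hψθ_fderiv] using this
  -- the sup bound
  have hbdd : ∀ u x, |ψθ x u| ≤ M u := by
    intro u x
    rw [hM]
    have hb : BddAbove (Set.range fun x => |ψθ x u|) := by
      have hcomp : IsCompact ((fun x => |ψθ x u|) '' Set.Icc (-ε) ε) :=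
        isCompact_Icc.image ((hcont_ψθ u).abs)
      refine hcomp.bddAbove.mono ?_
      rintro _ ⟨x, rfl⟩
      rcases le_total x (-ε) with hx | hx
      · exact ⟨-ε, ⟨le_refl _, by linarith⟩, by
          show |ψθ (-ε) u| = |ψθ x u|
          rw [constθL u (-ε) x (le_refl _) hx]⟩
      rcases le_total x ε with hx2 | hx2
      · exact ⟨x, ⟨hx, hx2⟩, rfl⟩
      · exact ⟨ε, ⟨by linarith, le_refl _⟩, by
          show |ψθ ε u| = |ψθ x u|
          rw [constθR u ε x (le_refl _) hx2]⟩
    exact le_ciSup hb x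
  intro t ht
  -- Step 1: each particle stays within Mi of its free trajectory
  have step1 : ∀ i, |xt t i - (y i + θ i * t)| ≤ Mi i := by
    intro i
    have h := hxt t i
    have e : xt t i - (y i + θ i * t)
        = -(∑ j ∈ Finset.univ.erase i, ψθ (xt t i - xt t j) (θ i - θ j)) := by
      linarith
    rw [e, abs_neg]
    calc |∑ j ∈ Finset.univ.erase i, ψθ (xt t i - xt t j) (θ i - θ j)|
        ≤ ∑ j ∈ Finset.univ.erase i, |ψθ (xt t i - xt t j) (θ i - θ j)| :=
          Finset.abs_sum_le_sum_abs _ _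
      _ ≤ ∑ j ∈ Finset.univ.erase i, M (θ i - θ j) :=
          Finset.sum_le_sum fun j _ => hbdd _ _
      _ = Mi i := (hMi i).symm
  -- Step 2: the main separation estimate
  have main : ∀ i j, i ≠ j →
      (0 < (θ i - θ j) * t → ε ≤ xt t i - xt t j) ∧
      ((θ i - θ j) * t < 0 → xt t i - xt t j ≤ -ε) ∧ (θ i - θ j) * t ≠ 0 := by
    intro i j hij
    set u := θ i - θ j with hu_def
    set s := u * t with hs_def
    set d := xt t i - xt t j with hd_def
    have hu : u ≠ 0 := sub_ne_zero.2 (hdist i j hij)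
    have hu' : 0 < |u| := abs_pos.2 hu
    have hT' := hT i j hij
    have hst : |y i - y j| + Mi i + Mi j + ε ≤ |u| * |t| := by
      rw [div_le_iff₀ hu'] at hT'
      nlinarith [hT', ht, abs_nonneg u, abs_nonneg t]
    have hdev : |d - s| ≤ |y i - y j| + Mi i + Mi j := by
      have e : d - s = (xt t i - (y i + θ i * t)) - (xt t j - (y j + θ j * t)) + (y i - y j) := by
        simp only [hd_def, hs_def, hu_def]; ring
      rw [e]
      have h1 := abs_add_le ((xt t i - (y i + θ i * t)) - (xt t j - (y j + θ j * t))) (y i - y j)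
      have h2 := abs_sub (xt t i - (y i + θ i * t)) (xt t j - (y j + θ j * t))
      have h3 := step1 i
      have h4 := step1 j
      linarith
    have hsabs : |s| = |u| * |t| := abs_mul u t
    have hkey : |d - s| ≤ |s| - ε := by rw [hsabs]; linarith
    have hs0 : s ≠ 0 := by
      intro h0
      rw [h0] at hkey; simp at hkey
      linarith [abs_nonneg d]
    refine ⟨?_, ?_, hs0⟩
    · intro hs
      have : |s| = s := abs_of_pos hs
      rw [this] at hkey
      have := (abs_le.1 hkey).1
      linarith
    · intro hs
      have : |s| = -s := abs_of_neg hs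
      rw [this] at hkey
      have := (abs_le.1 hkey).2
      linarith
  -- sign consequences
  have signs : ∀ i j, i ≠ j →
      ε ≤ |xt t i - xt t j| ∧
      Real.sign (xt t i - xt t j) = Real.sign (θ i - θ j) * Real.sign t := by
    intro i j hij
    obtain ⟨hp, hn, hs0⟩ := main i j hij
    rcases hs0.lt_or_gt with hs | hs
    · have hd := hn hs
      constructor
      · rw [abs_of_nonpos (by linarith)]; linarith
      · rw [Real.sign_of_neg (by linarith : xt t i - xt t j < 0), ← sign_mul',
          Real.sign_of_neg hs]
    · have hd := hp hs
      constructor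
      · rw [abs_of_pos (by linarith)]; linarith
      · rw [Real.sign_of_pos (by linarith : 0 < xt t i - xt t j), ← sign_mul',
          Real.sign_of_pos hs]
  refine ⟨signs, ?_⟩
  intro i
  constructor
  · have h := hxt t i
    have hsum : ∑ j ∈ Finset.univ.erase i, ψθ (xt t i - xt t j) (θ i - θ j)
        = ∑ j ∈ Finset.univ.erase i,
            ψθ (Real.sign t * Real.sign (θ i - θ j) * ε) (θ i - θ j) := by
      refine Finset.sum_congr rfl fun j hj => ?_
      have hij : i ≠ j := (Finset.ne_of_mem_erase hj).symm
      obtain ⟨hp, hn, hs0⟩ := main i j hij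
      rcases hs0.lt_or_gt with hs | hs
      · have hd := hn hs
        have hsgn : Real.sign t * Real.sign (θ i - θ j) * ε = -ε := by
          have : Real.sign (θ i - θ j) * Real.sign t = -1 := by
            rw [← sign_mul']; exact Real.sign_of_neg hs
          rw [mul_comm (Real.sign t), this]; ring
        rw [hsgn]
        exact constθL _ _ _ hd (le_refl _)
      · have hd := hp hs
        have hsgn : Real.sign t * Real.sign (θ i - θ j) * ε = ε := by
          have : Real.sign (θ i - θ j) * Real.sign t = 1 := by
            rw [← sign_mul']; exact Real.sign_of_pos hs
          rw [mul_comm (Real.sign t), this]; ring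
        rw [hsgn]
        exact constθR _ _ _ hd (le_refl _)
    rw [← hsum]; linarith
  · rw [hpt]
    have hsum : ∑ j ∈ Finset.univ.erase i, ψx (xt t i - xt t j) (θ i - θ j) = 0 := by
      refine Finset.sum_eq_zero fun j hj => ?_
      have hij : i ≠ j := (Finset.ne_of_mem_erase hj).symm
      exact hrange _ _ (signs i j hij).1
    rw [hsum, add_zero]
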